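/- For all integers n ≥ 2 and i ≥ 1, the Pell numbers satisfy P_{ni+i} = Q_i^{n−1} · P_{2i} − (−1)^i · Σ_{j=1}^{n−1} Q_i^{n−1−j} · P_{ij}, where Q denotes the Pell–Lucas numbers. -/

import Mathlib

section aux
variable (P Q : ℕ → ℤ)
    (hP0 : P 0 = 0) (hP1 : P 1 = 1)
    (hP : ∀ n : ℕ, P (n + 2) = 2 * P (n + 1) + P n)
    (hQ0 : Q 0 = 2) (hQ1 : Q 1 = 2)
    (hQ : ∀ n : ℕ, Q (n + 2) = 2 * Q (n + 1) + Q n)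

include hP0 hP1 hP in
lemma pell_add : ∀ a b : ℕ, P (a + b + 1) = P (a + 1) * P (b + 1) + P a * P b := by
  intro a b
  induction b using Nat.twoStepInduction with
  | zero => simp [hP0, hP1]
  | one =>
      have h2 : P 2 = 2 := by have := hP 0; simp [hP0, hP1] at this; omega
      show P (a + 2) = P (a + 1) * P 2 + P a * P 1
      rw [hP a, h2, hP1]; ring
  | more b ih1 ih2 =>
      show P (a + b + 1 + 2) = P (a + 1) * P (b + 3) + P a * P (b + 2)
      rw [hP (a + b + 1), show a + b + 1 + 1 = a + (b + 1) + 1 from rfl, ih2, ih1,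
        show b + 3 = b + 1 + 2 from rfl, hP (b + 1), hP b]
      ring

include hP0 hP1 hP in
lemma pell_docagne : ∀ k m : ℕ,
    P (k + 1) * P (m + k) - P k * P (m + k + 1) = (-1 : ℤ) ^ k * P m := by
  intro k
  induction k with
  | zero => intro m; simp [hP0, hP1]
  | succ k ih =>
      intro m
      have h3 := ih m
      show P (k + 2) * P (m + k + 1) - P (k + 1) * P (m + k + 2) = (-1 : ℤ) ^ (k + 1) * P m
      rw [hP k, hP (m + k), pow_succ]
      linear_combination -h3

include hP0 hP1 hP hQ0 hQ1 hQ in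
lemma pell_QP : ∀ k : ℕ, Q (k + 1) = P (k + 2) + P k := by
  intro k
  induction k using Nat.twoStepInduction with
  | zero =>
      have := hP 0; simp [hP0, hP1] at this; simp [hQ1, hP0]; omega
  | one =>
      have h2 : P 2 = 2 := by have := hP 0; simp [hP0, hP1] at this; omega
      show Q 2 = P 3 + P 1
      have h3 := hP 1
      have hq2 := hQ 0
      rw [show (1:ℕ) + 2 = 3 from rfl] at h3
      rw [hq2, hQ1, hQ0, h3, h2, hP1]; ring
  | more k ih1 ih2 =>
      show Q (k + 1 + 2) = P (k + 4) + P (k + 2)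
      rw [hQ (k + 1), ih2, ih1, show k + 4 = k + 2 + 2 from rfl, hP (k + 2), hP k]
      ring

include hP0 hP1 hP hQ0 hQ1 hQ in
lemma pell_step : ∀ (m k : ℕ),
    P (m + 2 * (k + 1)) = Q (k + 1) * P (m + (k + 1)) - (-1 : ℤ) ^ (k + 1) * P m := by
  intro m k
  have h1 := pell_add P hP0 hP1 hP (m + k) (k + 1)
  have h2 := pell_QP P Q hP0 hP1 hP hQ0 hQ1 hQ k
  have h3 := pell_docagne P hP0 hP1 hP k m
  rw [show m + 2 * (k + 1) = m + k + (k + 1) + 1 by ring, h1, h2]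
  show P (m + k + 1) * P (k + 2) + P (m + k) * P (k + 1)
      = (P (k + 2) + P k) * P (m + k + 1) - (-1 : ℤ) ^ (k + 1) * P m
  rw [pow_succ]
  linear_combination h3

end aux

/-- Pell: P_{ni+i} = Q_i^{n−1} · P_{2i} − (−1)^i · Σ_{j=1}^{n−1} Q_i^{n−1−j} · P_{ij}. -/
theorem pell_sum (P Q : ℕ → ℤ)
    (hP0 : P 0 = 0) (hP1 : P 1 = 1)
    (hP : ∀ n : ℕ, P (n + 2) = 2 * P (n + 1) + P n)
    (hQ0 : Q 0 = 2) (hQ1 : Q 1 = 2)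
    (hQ : ∀ n : ℕ, Q (n + 2) = 2 * Q (n + 1) + Q n)
    (n i : ℕ) (hn : 2 ≤ n) (hi : 1 ≤ i) :
    P (n * i + i) = Q i ^ (n - 1) * P (2 * i) -
      (-1 : ℤ) ^ i * ∑ j ∈ Finset.Icc 1 (n - 1), Q i ^ (n - 1 - j) * P (i * j) := by
  obtain ⟨k, rfl⟩ : ∃ k, i = k + 1 := ⟨i - 1, by omega⟩
  have key := pell_step P Q hP0 hP1 hP hQ0 hQ1 hQ
  induction n, hn using Nat.le_induction with
  | base =>
      have h := key (k + 1) k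
      rw [show 2 * (k + 1) + (k + 1) = (k + 1) + 2 * (k + 1) by ring, h,
        show (k + 1) + (k + 1) = 2 * (k + 1) by ring]
      simp
  | succ n hn ih =>
      obtain ⟨m, rfl⟩ : ∃ m, n = m + 1 := ⟨n - 1, by omega⟩
      simp only [Nat.add_sub_cancel] at ih ⊢
      rw [show (m + 1 + 1) * (k + 1) + (k + 1) = (m + 1) * (k + 1) + 2 * (k + 1) by ring,
        key ((m + 1) * (k + 1)) k, ih]
      rw [Finset.sum_Icc_succ_top (by omega : 1 ≤ m + 1)]
      have hmul : ∀ j ∈ Finset.Icc 1 m,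
          Q (k + 1) ^ (m + 1 - j) * P ((k + 1) * j)
            = Q (k + 1) * (Q (k + 1) ^ (m - j) * P ((k + 1) * j)) := by
        intro j hj
        simp only [Finset.mem_Icc] at hj
        rw [show m + 1 - j = (m - j) + 1 by omega, pow_succ]; ring
      rw [Finset.sum_congr rfl hmul, ← Finset.mul_sum]
      simp only [Nat.sub_self, pow_zero, one_mul, pow_succ]
      rw [show (m + 1) * (k + 1) = (k + 1) * (m + 1) by ring]
      ring
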